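/- Let k be a field, let B = k[x_1, …, x_n] be the polynomial ring in n variables over k, and let A be a retract of B over k witnessed by k-algebra homomorphisms ι : A → B and π : B → A with π ∘ ι = id_A. If the transcendence degree of A over k equals n, then ι is surjective, so that A is isomorphic to B = k[x_1, …, x_n] as a k-algebra. -/

import Mathlib

open MvPolynomial

/-- There is no algebraically independent family of `n + 1` elements in the polynomial
ring in `n` variables over a field, by a monomial-counting (dimension) argument. -/
lemma no_algIndep_option {k : Type*} [Field k] (m : ℕ)
    (w : Option (Fin m) → MvPolynomial (Fin m) k) :
    ¬ AlgebraicIndependent k w := by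
  classical
  intro hw
  -- notation
  set d : ℕ := Finset.univ.sup (fun i => (w i).totalDegree) with hd
  set c : ℕ := (m + 1) * d + 1 with hc
  set M : ℕ := c ^ m with hMdef
  set D : ℕ := (m + 1) * (M * d) with hD
  -- the finset of target monomials of "small" exponents
  set T : Finset (MvPolynomial (Fin m) k) := Finset.image
    (fun g : Fin m → Fin (D + 1) =>
      (monomial (Finsupp.equivFunOnFinite.symm fun i => (g i : ℕ)) (1 : k))) Finset.univ with hT
  set W : Submodule k (MvPolynomial (Fin m) k) := Submodule.span k (T : Set _) with hW
  -- the exponents of the independent family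
  set f : (Option (Fin m) → Fin (M + 1)) → (Option (Fin m) →₀ ℕ) :=
    fun e => Finsupp.equivFunOnFinite.symm fun i => (e i : ℕ) with hf
  have hfinj : Function.Injective f := by
    intro a b hab
    have : (fun i => ((a i : ℕ))) = fun i => ((b i : ℕ)) :=
      Finsupp.equivFunOnFinite.symm.injective hab
    funext i
    exact Fin.val_injective (congrFun this i)
  have hfapply : ∀ e i, f e i = (e i : ℕ) := by
    intro e i; simp [hf]
  -- key linear independence
  have hli : LinearIndependent k
      (fun e : Option (Fin m) → Fin (M + 1) => aeval w (monomial (f e) (1 : k))) := by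
    have h1 : LinearIndependent k
        (fun s : (Option (Fin m) →₀ ℕ) => (monomial s (1 : k) : MvPolynomial (Option (Fin m)) k)) := by
      have := (MvPolynomial.basisMonomials (Option (Fin m)) k).linearIndependent
      rwa [coe_basisMonomials] at this
    have h2 := (h1.comp f hfinj).map' (AlgHom.toLinearMap (aeval w))
      (LinearMap.ker_eq_bot.2 (algebraicIndependent_iff_injective_aeval.mp hw))
    exact h2
  -- membership of the family in the span of small monomials
  have hspan : ∀ p : MvPolynomial (Fin m) k, p.totalDegree ≤ D → p ∈ W := by
    intro p hp
    rw [p.as_sum]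
    refine Submodule.sum_mem _ fun s hs => ?_
    have hsle : ∀ i, s i ≤ D := by
      intro i
      refine le_trans ?_ (le_trans (le_totalDegree hs) hp)
      by_cases h0 : s i = 0
      · simp [h0]
      · exact Finset.single_le_sum (f := fun a => s a) (fun _ _ => Nat.zero_le _)
          (Finsupp.mem_support_iff.2 h0)
    have hmono : (monomial s (1 : k) : MvPolynomial (Fin m) k) ∈ T := by
      refine Finset.mem_image.2 ⟨fun i => ⟨s i, Nat.lt_succ_of_le (hsle i)⟩,
        Finset.mem_univ _, ?_⟩
      exact congrArg (fun t => monomial t (1 : k)) (Finsupp.equivFunOnFinite_symm_coe s)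
    have heq : (monomial s (coeff s p) : MvPolynomial (Fin m) k)
        = (coeff s p) • (monomial s (1 : k)) := by
      rw [smul_monomial, smul_eq_mul, mul_one]
    rw [heq]
    exact Submodule.smul_mem _ _ (Submodule.subset_span hmono)
  have hmem : ∀ e : Option (Fin m) → Fin (M + 1),
      aeval w (monomial (f e) (1 : k)) ∈ W := by
    intro e
    refine hspan _ ?_
    rw [aeval_monomial, map_one, one_mul]
    calc ((f e).prod fun i j => w i ^ j).totalDegree
        ≤ ∑ i ∈ (f e).support, (w i ^ (f e i)).totalDegree :=
          totalDegree_finset_prod _ _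
      _ ≤ ∑ i ∈ (f e).support, (f e i) * (w i).totalDegree :=
          Finset.sum_le_sum fun i _ => totalDegree_pow _ _
      _ ≤ ∑ i : Option (Fin m), (f e i) * (w i).totalDegree :=
          Finset.sum_le_sum_of_subset (Finset.subset_univ _)
      _ ≤ ∑ _i : Option (Fin m), M * d := by
          refine Finset.sum_le_sum fun i _ => ?_
          have hb1 : f e i ≤ M := by rw [hfapply]; exact Nat.lt_succ_iff.1 (e i).isLt
          have hb2 : (w i).totalDegree ≤ d := by
            rw [hd]; exact Finset.le_sup (f := fun j => (w j).totalDegree) (Finset.mem_univ i)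
          exact Nat.mul_le_mul hb1 hb2
      _ = D := by
          rw [Finset.sum_const, Finset.card_univ, Fintype.card_option, Fintype.card_fin,
            smul_eq_mul, hD]
  -- cardinality bound
  haveI : Module.Finite k W := Module.Finite.span_of_finite k T.finite_toSet
  have h1 : LinearIndependent k
      (fun e : Option (Fin m) → Fin (M + 1) =>
        (⟨aeval w (monomial (f e) (1 : k)), hmem e⟩ : W)) :=
    LinearIndependent.of_comp W.subtype hli
  have h2 := h1.fintype_card_le_finrank
  have h3 : Module.finrank k W ≤ T.card := finrank_span_finset_le_card T
  have h4 : T.card ≤ (D + 1) ^ m := by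
    refine Finset.card_image_le.trans ?_
    rw [Finset.card_univ, Fintype.card_fun, Fintype.card_fin, Fintype.card_fin]
  have h5 : (M + 1) ^ (m + 1) ≤ (D + 1) ^ m := by
    have hcard : Fintype.card (Option (Fin m) → Fin (M + 1)) = (M + 1) ^ (m + 1) := by
      rw [Fintype.card_fun, Fintype.card_fin, Fintype.card_option, Fintype.card_fin]
    calc (M + 1) ^ (m + 1) = Fintype.card (Option (Fin m) → Fin (M + 1)) := hcard.symm
      _ ≤ Module.finrank k W := h2
      _ ≤ T.card := h3
      _ ≤ (D + 1) ^ m := h4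
  -- arithmetic contradiction
  have hM1 : 1 ≤ M := Nat.one_le_pow _ _ (Nat.succ_pos _)
  have h6 : D + 1 ≤ c * M := by
    calc D + 1 = (m + 1) * d * M + 1 := by rw [hD]; ring
      _ ≤ (m + 1) * d * M + M := Nat.add_le_add_left hM1 _
      _ = c * M := by rw [hc]; ring
  have h7 : (D + 1) ^ m ≤ M ^ (m + 1) := by
    calc (D + 1) ^ m ≤ (c * M) ^ m := Nat.pow_le_pow_left h6 m
      _ = c ^ m * M ^ m := mul_pow _ _ _
      _ = M * M ^ m := by rw [hMdef]
      _ = M ^ (m + 1) := by rw [pow_succ]; ring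
  have h8 : (M + 1) ^ (m + 1) ≤ M ^ (m + 1) := h5.trans h7
  exact absurd h8 (not_le.2 (Nat.pow_lt_pow_left (Nat.lt_succ_self M) (Nat.succ_ne_zero m)))

set_option maxHeartbeats 1000000
set_option synthInstance.maxHeartbeats 200000

/-- If `A` is a retract of `k[x₁, …, xₙ]` over a field `k`, witnessed by `ι, π`, and the
transcendence degree of `A` over `k` equals `n` (i.e., `A` admits a transcendence basis
over `k` indexed by `Fin n`), then `ι` is surjective, so `A ≅ k[x₁, …, xₙ]`. -/
theorem retract_trdeg_top {k : Type*} [Field k] (n : ℕ)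
    {A : Type*} [CommRing A] [Algebra k A]
    (ι : A →ₐ[k] MvPolynomial (Fin n) k) (π : MvPolynomial (Fin n) k →ₐ[k] A)
    (h : π.comp ι = AlgHom.id k A)
    (htr : ∃ x : Fin n → A, IsTranscendenceBasis k x) :
    Function.Surjective ι ∧ Nonempty (A ≃ₐ[k] MvPolynomial (Fin n) k) := by
  classical
  obtain ⟨x, hx⟩ := htr
  have hπι : ∀ a, π (ι a) = a := fun a => AlgHom.congr_fun h a
  have hι_inj : Function.Injective ι := fun a b hab => by
    rw [← hπι a, ← hπι b, hab]
  have hy : AlgebraicIndependent k (⇑ι ∘ x) := hx.1.map' hι_inj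
  have hπ_inj : Function.Injective π := by
    rw [injective_iff_map_eq_zero]
    intro p hp
    by_contra hpne
    set S := Algebra.adjoin k (Set.range (⇑ι ∘ x)) with hS
    have halg : IsAlgebraic S p := by
      by_contra ht
      exact no_algIndep_option n _ ((AlgebraicIndependent.option_iff (x := ⇑ι ∘ x) (a := p)).2 ⟨hy, ht⟩)
    obtain ⟨q0, hq0, hqev⟩ := halg
    -- any polynomial over `S` vanishing at `p` has zero constant coefficient
    have hc0 : ∀ q : Polynomial S, Polynomial.aeval p q = 0 → q.coeff 0 = 0 := by
      intro q hev
      have h1 : Polynomial.eval₂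
          ((π : MvPolynomial (Fin n) k →+* A).comp (algebraMap S (MvPolynomial (Fin n) k)))
          ((π : MvPolynomial (Fin n) k →+* A) p) q = 0 := by
        rw [← Polynomial.hom_eval₂, ← Polynomial.aeval_def, hev, map_zero]
      rw [show ((π : MvPolynomial (Fin n) k →+* A) p) = 0 from hp,
        Polynomial.eval₂_at_zero, RingHom.comp_apply] at h1
      have h2 : (algebraMap S (MvPolynomial (Fin n) k)) (q.coeff 0)
          ∈ (Algebra.adjoin k (Set.range x)).map ι := by
        rw [AlgHom.map_adjoin, ← Set.range_comp, ← hS]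
        exact (q.coeff 0).2
      obtain ⟨a, _, ha⟩ := h2
      have ha0 : a = 0 := by
        have h3 : π (ι a) = π ((algebraMap S (MvPolynomial (Fin n) k)) (q.coeff 0)) :=
          congrArg π ha
        rw [hπι] at h3
        exact h3.trans h1
      have : (algebraMap S (MvPolynomial (Fin n) k)) (q.coeff 0) = 0 := by
        rw [← ha, ha0, map_zero]
      exact (map_eq_zero_iff _ (FaithfulSMul.algebraMap_injective _ _)).1 this
    have key : ∀ N : ℕ, ∀ q : Polynomial S,
        q.natDegree ≤ N → q ≠ 0 → Polynomial.aeval p q = 0 → False := by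
      intro N
      induction N with
      | zero =>
        intro q hdeg hq0 hev
        have : q = Polynomial.C (q.coeff 0) := Polynomial.eq_C_of_natDegree_le_zero hdeg
        rw [hc0 q hev, map_zero] at this
        exact hq0 this
      | succ N ih =>
        intro q hdeg hq0 hev
        obtain ⟨r, hr⟩ := Polynomial.X_dvd_iff.2 (hc0 q hev)
        have hr0 : r ≠ 0 := by
          rintro rfl
          rw [mul_zero] at hr
          exact hq0 hr
        rw [hr, map_mul, Polynomial.aeval_X] at hev
        have hev' : Polynomial.aeval p r = 0 := by
          rcases mul_eq_zero.1 hev with h' | h'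
          · exact absurd h' hpne
          · exact h'
        have hdeg' : r.natDegree ≤ N := by
          have : q.natDegree = 1 + r.natDegree := by
            rw [hr, Polynomial.natDegree_mul Polynomial.X_ne_zero hr0,
              Polynomial.natDegree_X]
          omega
        exact ih r hdeg' hr0 hev'
    exact key q0.natDegree q0 le_rfl hq0 hqev
  have hsurj : Function.Surjective ι := fun b => ⟨π b, hπ_inj (hπι (π b))⟩
  exact ⟨hsurj, ⟨AlgEquiv.ofBijective ι ⟨hι_inj, hsurj⟩⟩⟩
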